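/- Let S be an inverse monoid and let L(S) be the category with objects the idempotents of S, arrows (e, x) with xx⁻¹ ≤ e, domain (x⁻¹x, x⁻¹x), codomain (e,e), and composition (e,x)(f,y) = (e, xy) when x⁻¹x = f. Then L(S) is left cancellative, and it is right cancellative if and only if S is E-unitary. -/
import Mathlib


/-- An inverse monoid: a monoid with an inverse operation such that
`a * a⁻¹ * a = a`, `a⁻¹ * a * a⁻¹ = a⁻¹`, and idempotents commute. -/
class InverseMonoid (S : Type*) extends Monoid S, Inv S where
  mul_inv_mul : ∀ a : S, a * a⁻¹ * a = a
  inv_mul_inv : ∀ a : S, a⁻¹ * a * a⁻¹ = a⁻¹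
  idem_comm : ∀ e f : S, e * e = e → f * f = f → e * f = f * e

/-- The natural partial order on an inverse monoid. -/
def natLe {S : Type*} [InverseMonoid S] (a b : S) : Prop :=
  ∃ e : S, e * e = e ∧ a = b * e

namespace IMAux
open InverseMonoid
variable {S : Type*} [InverseMonoid S]

lemma i_right (a : S) : (a * a⁻¹) * (a * a⁻¹) = a * a⁻¹ := by
  calc (a * a⁻¹) * (a * a⁻¹) = (a * a⁻¹ * a) * a⁻¹ := by simp only [mul_assoc]
    _ = a * a⁻¹ := by rw [mul_inv_mul]

lemma i_left (a : S) : (a⁻¹ * a) * (a⁻¹ * a) = a⁻¹ * a := by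
  calc (a⁻¹ * a) * (a⁻¹ * a) = (a⁻¹ * a * a⁻¹) * a := by simp only [mul_assoc]
    _ = a⁻¹ * a := by rw [inv_mul_inv]

lemma genuniq (a b c : S) (hab : a*b*a = a) (hba : b*a*b = b)
    (hac : a*c*a = a) (hca : c*a*c = c) : b = c := by
  have iab : (a*b)*(a*b) = a*b := by rw [← mul_assoc, hab]
  have iac : (a*c)*(a*c) = a*c := by rw [← mul_assoc, hac]
  have iba : (b*a)*(b*a) = b*a := by rw [← mul_assoc, hba]
  have ica : (c*a)*(c*a) = c*a := by rw [← mul_assoc, hca]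
  -- (i) : c * (a*b) = c
  have i1 : c * ((a*b)*(a*c)) = c * (a*b) := by
    rw [idem_comm _ _ iab iac, ← mul_assoc c (a*c) (a*b), ← mul_assoc c a c, hca]
  have i2 : c * ((a*b)*(a*c)) = c := by
    calc c * ((a*b)*(a*c)) = c * (((a*b)*a)*c) := by rw [mul_assoc (a*b) a c]
      _ = c * (a*c) := by rw [hab]
      _ = c := by rw [← mul_assoc, hca]
  have hcab : c * (a*b) = c := i1.symm.trans i2
  -- (iii) : (c*a)*b = b
  have i3 : b = (c*a)*b := by
    calc b = (b*a)*b := hba.symm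
      _ = ((b*a)*(c*a))*b := by
          have : (b*a)*(c*a) = b*a := by
            rw [mul_assoc b a (c*a), ← mul_assoc a c a, hac]
          rw [this]
      _ = ((c*a)*(b*a))*b := by rw [idem_comm _ _ iba ica]
      _ = (c*a)*((b*a)*b) := by simp only [mul_assoc]
      _ = (c*a)*b := by rw [hba]
  calc b = (c*a)*b := i3
    _ = c * (a*b) := by rw [mul_assoc]
    _ = c := hcab

lemma inv_invol (a : S) : a⁻¹⁻¹ = a :=
  genuniq a⁻¹ a⁻¹⁻¹ a (mul_inv_mul a⁻¹) (inv_mul_inv a⁻¹) (inv_mul_inv a) (mul_inv_mul a)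

lemma inv_idem (e : S) (he : e*e = e) : e⁻¹ = e :=
  genuniq e e⁻¹ e (mul_inv_mul e) (inv_mul_inv e) (by rw [he, he]) (by rw [he, he])

lemma mul_inv_rev' (a b : S) : (a*b)⁻¹ = b⁻¹ * a⁻¹ := by
  refine genuniq (a*b) (a*b)⁻¹ (b⁻¹*a⁻¹) (mul_inv_mul _) (inv_mul_inv _) ?_ ?_
  · calc (a*b)*(b⁻¹*a⁻¹)*(a*b) = a*((b*b⁻¹)*((a⁻¹*a)*b)) := by simp only [mul_assoc]
      _ = a*((a⁻¹*a)*((b*b⁻¹)*b)) := by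
          rw [← mul_assoc (b*b⁻¹) (a⁻¹*a) b, idem_comm _ _ (i_right b) (i_left a),
            mul_assoc (a⁻¹*a) (b*b⁻¹) b]
      _ = a*((a⁻¹*a)*b) := by rw [mul_inv_mul b]
      _ = a*b := by rw [← mul_assoc, ← mul_assoc, mul_inv_mul]
  · calc (b⁻¹*a⁻¹)*(a*b)*(b⁻¹*a⁻¹) = b⁻¹*((a⁻¹*a)*((b*b⁻¹)*a⁻¹)) := by simp only [mul_assoc]
      _ = b⁻¹*((b*b⁻¹)*((a⁻¹*a)*a⁻¹)) := by
          rw [← mul_assoc (a⁻¹*a) (b*b⁻¹) a⁻¹, idem_comm _ _ (i_left a) (i_right b),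
            mul_assoc (b*b⁻¹) (a⁻¹*a) a⁻¹]
      _ = b⁻¹*((b*b⁻¹)*a⁻¹) := by rw [mul_assoc a⁻¹ a a⁻¹, ← mul_assoc a⁻¹ a a⁻¹, inv_mul_inv a]
      _ = b⁻¹*a⁻¹ := by rw [← mul_assoc, ← mul_assoc, inv_mul_inv]

/-- if `e` is idempotent and `e = b * f` with `f` idempotent then `e * b = e`. -/
lemma absorb {e b : S} (he : e*e = e) (f : S) (hf : f*f = f) (hef : e = b * f) : e * b = e := by
  have hinv : e⁻¹ = e := inv_idem e he
  have hei : e⁻¹ = f * b⁻¹ := by rw [hef, mul_inv_rev', inv_idem f hf]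
  calc e * b = e * (e⁻¹ * b) := by rw [hinv, ← mul_assoc, he]
    _ = (b*f) * ((f*b⁻¹) * b) := by rw [← hei, ← hef]
    _ = b * (f * (f * (b⁻¹*b))) := by simp only [mul_assoc]
    _ = b * (f * (b⁻¹*b)) := by rw [← mul_assoc f f, hf]
    _ = b * ((b⁻¹*b) * f) := by rw [idem_comm f (b⁻¹*b) hf (i_left b)]
    _ = (b*b⁻¹*b) * f := by simp only [mul_assoc]
    _ = b * f := by rw [mul_inv_mul]
    _ = e := hef.symm

lemma abs_left {g a : S} (hg : g*g = g) (h : natLe a g) : g * a = a := by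
  obtain ⟨e₀, he₀, h⟩ := h
  rw [h, ← mul_assoc, hg]

end IMAux

open IMAux InverseMonoid

/-- The arrows of the category `L(S)` are pairs `(e, x)` with `e` idempotent and
`x * x⁻¹ ≤ e`; `(e, x) ∘ (f, y) = (e, x * y)` is defined when `x⁻¹ * x = f`.
Left cancellativity always holds; right cancellativity holds iff `S` is E-unitary. -/
theorem stmt19 {S : Type*} [InverseMonoid S] :
    (∀ e f x y z : S, e * e = e → f * f = f →
        natLe (x * x⁻¹) e → x⁻¹ * x = f →
        natLe (y * y⁻¹) f → natLe (z * z⁻¹) f →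
        x * y = x * z → y = z) ∧
    ((∀ f g x y z : S, f * f = f → g * g = g →
        natLe (y * y⁻¹) f → natLe (z * z⁻¹) f →
        natLe (x * x⁻¹) g → y⁻¹ * y = g → z⁻¹ * z = g →
        y * x = z * x → y = z) ↔
      (∀ e s : S, e * e = e → natLe e s → s * s = s)) := by
  constructor
  · -- left cancellative
    intro e f x y z he hf hxe hxf hyf hzf hxyz
    have h1 : f * (y*y⁻¹) = y*y⁻¹ := abs_left hf hyf
    have h2 : f * (z*z⁻¹) = z*z⁻¹ := abs_left hf hzf
    have hfy : f * y = y := by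
      have h3 : f*((y*y⁻¹)*y) = y := by rw [← mul_assoc, h1, mul_inv_mul]
      rw [mul_inv_mul] at h3; exact h3
    have hfz : f * z = z := by
      have h3 : f*((z*z⁻¹)*z) = z := by rw [← mul_assoc, h2, mul_inv_mul]
      rw [mul_inv_mul] at h3; exact h3
    calc y = f*y := hfy.symm
      _ = x⁻¹*(x*y) := by rw [← hxf, mul_assoc]
      _ = x⁻¹*(x*z) := by rw [hxyz]
      _ = f*z := by rw [← mul_assoc, hxf]
      _ = z := hfz
  constructor
  · -- right cancellative → E-unitary
    intro RC e s he hes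
    obtain ⟨f, hf, hef⟩ := hes
    have hes1 : e * s = e := absorb he f hf hef
    have hessi : e * (s⁻¹*s) = e := by
      calc e * (s⁻¹*s) = (s*f) * (s⁻¹*s) := by rw [← hef]
        _ = s * (f * (s⁻¹*s)) := by rw [mul_assoc]
        _ = s * ((s⁻¹*s) * f) := by rw [idem_comm f (s⁻¹*s) hf (i_left s)]
        _ = (s*s⁻¹*s) * f := by simp only [mul_assoc]
        _ = s * f := by rw [mul_inv_mul]
        _ = e := hef.symm
    have hsse : (s⁻¹*s) * e = e := by
      rw [idem_comm (s⁻¹*s) e (i_left s) he]; exact hessi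
    have hfse : (s*e)*(s*e) = s*e := by
      calc (s*e)*(s*e) = s*((e*s)*e) := by simp only [mul_assoc]
        _ = s*(e*e) := by rw [hes1]
        _ = s*e := by rw [he]
    have hesi : e * s⁻¹ = e := by
      refine absorb he (s*e) hfse ?_
      calc e = (s⁻¹*s)*e := hsse.symm
        _ = s⁻¹*(s*e) := by rw [mul_assoc]
    have hsei : (s*e)⁻¹ = e := by
      rw [mul_inv_rev', inv_idem e he, hesi]
    have hse : s*e = e := by
      rw [← inv_invol (s*e), hsei, inv_idem e he]
    have hkey : s = s⁻¹*s := by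
      refine RC 1 (s⁻¹*s) e s (s⁻¹*s) (one_mul 1) (i_left s) ?_ ?_ ?_ rfl ?_ ?_
      · exact ⟨s*s⁻¹, i_right s, (one_mul _).symm⟩
      · refine ⟨s⁻¹*s, i_left s, ?_⟩
        rw [inv_idem (s⁻¹*s) (i_left s), i_left s, one_mul]
      · refine ⟨e, he, ?_⟩
        rw [inv_idem e he, he, hsse]
      · rw [inv_idem (s⁻¹*s) (i_left s), i_left s]
      · rw [hse, hsse]
    nth_rewrite 2 [hkey]
    rw [← mul_assoc, mul_inv_mul]
  · -- E-unitary → right cancellative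
    intro EU f g x y z hf hg hyf hzf hxg hyg hzg hyzx
    obtain ⟨e, he, hge, hyex⟩ : ∃ e : S, e*e = e ∧ g*e = e ∧ y*e = z*e :=
      ⟨x*x⁻¹, i_right x, abs_left hg hxg, by rw [← mul_assoc, ← mul_assoc, hyzx]⟩
    -- p := y*z⁻¹ is idempotent
    have hcz : (z*(e*z⁻¹))*(z*(e*z⁻¹)) = z*(e*z⁻¹) := by
      calc (z*(e*z⁻¹))*(z*(e*z⁻¹)) = z*(e*((z⁻¹*z)*(e*z⁻¹))) := by simp only [mul_assoc]
        _ = z*(e*(g*(e*z⁻¹))) := by rw [hzg]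
        _ = z*(e*(e*z⁻¹)) := by rw [← mul_assoc g e z⁻¹, hge]
        _ = z*((e*e)*z⁻¹) := by rw [← mul_assoc e e z⁻¹]
        _ = z*(e*z⁻¹) := by rw [he]
    have hp : (y*z⁻¹)*(y*z⁻¹) = y*z⁻¹ := by
      refine EU _ _ hcz ⟨z*(e*z⁻¹), hcz, ?_⟩
      calc z*(e*z⁻¹) = (z*e)*z⁻¹ := by rw [mul_assoc]
        _ = (y*e)*z⁻¹ := by rw [hyex]
        _ = y*(e*z⁻¹) := by rw [mul_assoc]
        _ = y*((g*e)*z⁻¹) := by rw [hge]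
        _ = y*(g*(e*z⁻¹)) := by rw [mul_assoc g e z⁻¹]
        _ = y*((z⁻¹*z)*(e*z⁻¹)) := by rw [hzg]
        _ = (y*z⁻¹)*(z*(e*z⁻¹)) := by simp only [mul_assoc]
    have hcy : (y*(e*y⁻¹))*(y*(e*y⁻¹)) = y*(e*y⁻¹) := by
      calc (y*(e*y⁻¹))*(y*(e*y⁻¹)) = y*(e*((y⁻¹*y)*(e*y⁻¹))) := by simp only [mul_assoc]
        _ = y*(e*(g*(e*y⁻¹))) := by rw [hyg]
        _ = y*(e*(e*y⁻¹)) := by rw [← mul_assoc g e y⁻¹, hge]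
        _ = y*((e*e)*y⁻¹) := by rw [← mul_assoc e e y⁻¹]
        _ = y*(e*y⁻¹) := by rw [he]
    have hq : (z*y⁻¹)*(z*y⁻¹) = z*y⁻¹ := by
      refine EU _ _ hcy ⟨y*(e*y⁻¹), hcy, ?_⟩
      calc y*(e*y⁻¹) = (y*e)*y⁻¹ := by rw [mul_assoc]
        _ = (z*e)*y⁻¹ := by rw [hyex]
        _ = z*(e*y⁻¹) := by rw [mul_assoc]
        _ = z*((g*e)*y⁻¹) := by rw [hge]
        _ = z*(g*(e*y⁻¹)) := by rw [mul_assoc g e y⁻¹]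
        _ = z*((y⁻¹*y)*(e*y⁻¹)) := by rw [hyg]
        _ = (z*y⁻¹)*(y*(e*y⁻¹)) := by simp only [mul_assoc]
    have hpq : y*z⁻¹ = z*y⁻¹ := by
      have h1 : (z*y⁻¹)⁻¹ = y*z⁻¹ := by rw [mul_inv_rev', inv_invol]
      rw [← h1, inv_idem _ hq]
    have hyg' : y * g = y := by rw [← hyg, ← mul_assoc, mul_inv_mul]
    have hzg' : z * g = z := by rw [← hzg, ← mul_assoc, mul_inv_mul]
    have hy : y = (y*z⁻¹)*z := by rw [mul_assoc, hzg, hyg']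
    have hz : z = (z*y⁻¹)*y := by rw [mul_assoc, hyg, hzg']
    calc y = (y*z⁻¹)*z := hy
      _ = (y*z⁻¹)*((z*y⁻¹)*y) := by rw [← hz]
      _ = (y*z⁻¹)*((y*z⁻¹)*y) := by rw [← hpq]
      _ = ((y*z⁻¹)*(y*z⁻¹))*y := by rw [← mul_assoc]
      _ = (y*z⁻¹)*y := by rw [hp]
      _ = (z*y⁻¹)*y := by rw [hpq]
      _ = z := hz.symm
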